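/- arXiv:0705.1094 — 3 statements merged into one kernel-verified Lean document; each statement's English description precedes it below -/
import Mathlib

section
/- Let {Aᵢ}ᵢ₌₁ⁿ be disjoint annuli in ℝ², Aᵢ = {rᵢ < |x − cᵢ| ≤ sᵢ}, and let f(x) = Σᵢ χ_{Aᵢ}(x) vᵢ(x) aᵢ/|x − cᵢ| where each vᵢ : Aᵢ → ℝᵏ satisfies |vᵢ| = 1 and aᵢ ∈ ℝ are constants. Writing τᵢ = log(sᵢ/rᵢ), for every t > 0 one has t² λ_f(t) ≤ π Σᵢ aᵢ² (1 − e^{−2τᵢ}). -/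
open MeasureTheory
open scoped ENNReal

lemma vol_cb (x : EuclideanSpace ℝ (Fin 2)) (ρ : ℝ) (hρ : 0 ≤ ρ) :
    volume (Metric.closedBall x ρ) = ENNReal.ofReal (Real.pi * ρ ^ 2) := by
  rw [EuclideanSpace.volume_closedBall]
  simp only [Fintype.card_fin]
  rw [show ((2:ℕ):ℝ)/2 + 1 = 2 by norm_num, Real.Gamma_two,
    show Real.sqrt Real.pi ^ 2 = Real.pi from Real.sq_sqrt Real.pi_pos.le,
    ← ENNReal.ofReal_pow hρ, ← ENNReal.ofReal_mul (by positivity)]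
  ring_nf

set_option maxHeartbeats 1000000 in
theorem annuli_distribution_estimate {n k : ℕ}
    (c : Fin n → EuclideanSpace ℝ (Fin 2)) (r s a : Fin n → ℝ)
    (v : Fin n → EuclideanSpace ℝ (Fin 2) → EuclideanSpace ℝ (Fin k))
    (hr : ∀ i, 0 < r i) (hrs : ∀ i, r i < s i)
    (hdisj : Pairwise (Function.onFun Disjoint
      (fun i => {x : EuclideanSpace ℝ (Fin 2) | r i < dist x (c i) ∧ dist x (c i) ≤ s i})))
    (hv : ∀ i, ∀ x ∈ {x : EuclideanSpace ℝ (Fin 2) |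
        r i < dist x (c i) ∧ dist x (c i) ≤ s i}, ‖v i x‖ = 1)
    (f : EuclideanSpace ℝ (Fin 2) → EuclideanSpace ℝ (Fin k))
    (hf : f = fun x => ∑ i, Set.indicator
        {y : EuclideanSpace ℝ (Fin 2) | r i < dist y (c i) ∧ dist y (c i) ≤ s i}
        (fun y => (a i / dist y (c i)) • v i y) x) :
    ∀ t : ℝ, 0 < t →
      ENNReal.ofReal (t ^ 2) * volume {x | t < ‖f x‖} ≤
        ENNReal.ofReal (Real.pi * ∑ i, (a i) ^ 2 *
          (1 - Real.exp (-2 * Real.log (s i / r i)))) := by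
  intro t ht
  set A : Fin n → Set (EuclideanSpace ℝ (Fin 2)) :=
    fun i => {x | r i < dist x (c i) ∧ dist x (c i) ≤ s i} with hA
  -- exponential simplification
  have hexp : ∀ i, 1 - Real.exp (-2 * Real.log (s i / r i)) = 1 - (r i / s i) ^ 2 := by
    intro i
    have hs : 0 < s i := (hr i).trans (hrs i)
    have h1 : -2 * Real.log (s i / r i) = Real.log ((r i / s i) ^ 2) := by
      rw [Real.log_pow, Real.log_div (hr i).ne' hs.ne', Real.log_div hs.ne' (hr i).ne']
      ring
    rw [h1, Real.exp_log (pow_pos (div_pos (hr i) hs) 2)]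
  -- inclusion
  have key : {x | t < ‖f x‖} ⊆ ⋃ i, A i ∩ Metric.ball (c i) (|a i| / t) := by
    intro x hx
    simp only [Set.mem_setOf_eq] at hx
    by_cases hmem : ∃ i, x ∈ A i
    · obtain ⟨i, hi⟩ := hmem
      have hd : 0 < dist x (c i) := (hr i).trans hi.1
      have hfx : f x = (a i / dist x (c i)) • v i x := by
        simp only [hf]
        rw [Finset.sum_eq_single i]
        · exact Set.indicator_of_mem hi _
        · intro j _ hj
          exact Set.indicator_of_notMem (fun hxj => Set.disjoint_left.mp (hdisj hj) hxj hi) _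
        · intro h; exact absurd (Finset.mem_univ i) h
      have hnorm : ‖f x‖ = |a i| / dist x (c i) := by
        rw [hfx, norm_smul, hv i x hi, mul_one, Real.norm_eq_abs, abs_div,
          abs_of_pos hd]
      rw [hnorm] at hx
      have : dist x (c i) < |a i| / t := by
        rw [lt_div_iff₀ ht]
        rw [lt_div_iff₀ hd] at hx
        linarith [hx]
      exact Set.mem_iUnion.mpr ⟨i, hi, Metric.mem_ball.mpr this⟩
    · exfalso
      push_neg at hmem
      have : f x = 0 := by
        simp only [hf]
        apply Finset.sum_eq_zero
        intro i _
        exact Set.indicator_of_notMem (hmem i) _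
      rw [this, norm_zero] at hx
      linarith
  -- per-index volume bound
  have bound : ∀ i, ENNReal.ofReal (t ^ 2) * volume (A i ∩ Metric.ball (c i) (|a i| / t)) ≤
      ENNReal.ofReal (Real.pi * ((a i) ^ 2 * (1 - (r i / s i) ^ 2))) := by
    intro i
    have hs : 0 < s i := (hr i).trans (hrs i)
    by_cases hcase : |a i| / t ≤ r i
    · have : A i ∩ Metric.ball (c i) (|a i| / t) = ∅ := by
        ext x
        simp only [Set.mem_inter_iff, Metric.mem_ball, Set.mem_empty_iff_false, iff_false,
          not_and, hA, Set.mem_setOf_eq, and_imp]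
        intro h1 _ h3
        linarith
      rw [this, measure_empty, mul_zero]
      positivity
    · push_neg at hcase
      set m : ℝ := min (s i) (|a i| / t) with hm
      have hrm : r i < m := lt_min (hrs i) hcase
      have hsub : A i ∩ Metric.ball (c i) (|a i| / t) ⊆
          Metric.closedBall (c i) m \ Metric.closedBall (c i) (r i) := by
        intro x ⟨⟨h1, h2⟩, h3⟩
        rw [Metric.mem_ball] at h3
        constructor
        · exact Metric.mem_closedBall.mpr (le_min h2 h3.le)
        · simp only [Metric.mem_closedBall, not_le]; exact h1
      have hdiff : volume (Metric.closedBall (c i) m \ Metric.closedBall (c i) (r i)) =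
          ENNReal.ofReal (Real.pi * m ^ 2) - ENNReal.ofReal (Real.pi * r i ^ 2) := by
        rw [measure_diff (Metric.closedBall_subset_closedBall hrm.le)
          measurableSet_closedBall.nullMeasurableSet
          (measure_closedBall_lt_top.ne),
          vol_cb _ _ (le_of_lt ((hr i).trans hrm)), vol_cb _ _ (hr i).le]
      calc ENNReal.ofReal (t ^ 2) * volume (A i ∩ Metric.ball (c i) (|a i| / t))
          ≤ ENNReal.ofReal (t ^ 2) *
            (ENNReal.ofReal (Real.pi * m ^ 2) - ENNReal.ofReal (Real.pi * r i ^ 2)) := by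
            rw [← hdiff]; exact mul_le_mul_right (measure_mono hsub) _
        _ = ENNReal.ofReal (t ^ 2) * ENNReal.ofReal (Real.pi * m ^ 2 - Real.pi * r i ^ 2) := by
            rw [ENNReal.ofReal_sub _ (by positivity)]
        _ = ENNReal.ofReal (t ^ 2 * (Real.pi * m ^ 2 - Real.pi * r i ^ 2)) := by
            rw [← ENNReal.ofReal_mul (by positivity)]
        _ ≤ ENNReal.ofReal (Real.pi * ((a i) ^ 2 * (1 - (r i / s i) ^ 2))) := by
            apply ENNReal.ofReal_le_ofReal
            have hms : m ≤ s i := min_le_left _ _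
            have hma : m ≤ |a i| / t := min_le_right _ _
            have htm : t * m ≤ |a i| := by
              rw [← le_div_iff₀' ht]; exact hma
            have h1 : 1 - (r i / s i) ^ 2 = (s i ^ 2 - r i ^ 2) / s i ^ 2 := by
              field_simp
            rw [h1]
            have hs2 : (0:ℝ) < s i ^ 2 := by positivity
            have hgoal : Real.pi * (a i ^ 2 * ((s i ^ 2 - r i ^ 2) / s i ^ 2))
                = (Real.pi * a i ^ 2 * (s i ^ 2 - r i ^ 2)) / s i ^ 2 := by ring
            rw [hgoal, le_div_iff₀ hs2]
            have hsr : (0:ℝ) ≤ s i ^ 2 - r i ^ 2 := by nlinarith [hrs i, (hr i).le]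
            rcases min_cases (s i) (|a i| / t) with ⟨hmeq, hle⟩ | ⟨hmeq, hle⟩
            · -- m = s i, s i ≤ |a i| / t, so t * s i ≤ |a i|
              have hmeq' : m = s i := hm.trans hmeq
              rw [hmeq'] at htm ⊢
              have h2 : t ^ 2 * s i ^ 2 ≤ a i ^ 2 := by
                nlinarith [mul_le_mul htm htm (by positivity : (0:ℝ) ≤ t * s i)
                  (abs_nonneg (a i)), sq_abs (a i)]
              nlinarith [mul_nonneg (mul_nonneg Real.pi_pos.le hsr) (sub_nonneg.mpr h2)]
            · -- m = |a i| / t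
              have hmeq' : m = |a i| / t := hm.trans hmeq
              rw [hmeq']
              have h2 : t ^ 2 * (|a i| / t) ^ 2 = a i ^ 2 := by
                rw [← mul_pow, mul_div_cancel₀ _ ht.ne', sq_abs]
              have hlt : |a i| < s i * t := (div_lt_iff₀ ht).mp hle
              have h3 : a i ^ 2 ≤ t ^ 2 * s i ^ 2 := by
                nlinarith [mul_le_mul hlt.le hlt.le (abs_nonneg (a i))
                  (by positivity : (0:ℝ) ≤ s i * t), sq_abs (a i)]
              have key2 : t ^ 2 * (Real.pi * (|a i| / t) ^ 2 - Real.pi * r i ^ 2) * s i ^ 2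
                  = Real.pi * (t ^ 2 * (|a i| / t) ^ 2) * s i ^ 2
                    - Real.pi * t ^ 2 * r i ^ 2 * s i ^ 2 := by ring
              rw [key2, h2]
              nlinarith [mul_le_mul_of_nonneg_left h3
                (mul_nonneg Real.pi_pos.le (sq_nonneg (r i)))]
  -- put it together
  calc ENNReal.ofReal (t ^ 2) * volume {x | t < ‖f x‖}
      ≤ ENNReal.ofReal (t ^ 2) * ∑ i, volume (A i ∩ Metric.ball (c i) (|a i| / t)) := by
        apply mul_le_mul_right
        exact (measure_mono key).trans (measure_iUnion_fintype_le _ _)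
    _ = ∑ i, ENNReal.ofReal (t ^ 2) * volume (A i ∩ Metric.ball (c i) (|a i| / t)) := by
        rw [Finset.mul_sum]
    _ ≤ ∑ i, ENNReal.ofReal (Real.pi * ((a i) ^ 2 * (1 - (r i / s i) ^ 2))) :=
        Finset.sum_le_sum fun i _ => bound i
    _ = ENNReal.ofReal (Real.pi * ∑ i, (a i) ^ 2 *
          (1 - Real.exp (-2 * Real.log (s i / r i)))) := by
        simp_rw [hexp]
        rw [Finset.mul_sum, ENNReal.ofReal_sum_of_nonneg]
        intro i _
        have hs : 0 < s i := (hr i).trans (hrs i)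
        have : (r i / s i) ^ 2 ≤ 1 := by
          rw [sq_le_one_iff_abs_le_one, abs_div, abs_of_pos (hr i), abs_of_pos hs,
            div_le_one hs]
          exact (hrs i).le
        exact mul_nonneg Real.pi_pos.le
          (mul_nonneg (sq_nonneg _) (by linarith))
end

section
/- Let {Aᵢ}ᵢ₌₁ⁿ be disjoint annuli Aᵢ = {rᵢ < |x − cᵢ| ≤ sᵢ} ⊂ ℝ² whose radii satisfy r₁ < s₁ ≤ r₂ < s₂ ≤ … ≤ rₙ < sₙ (so they can be arranged concentrically without overlap). Let f(x) = Σᵢ χ_{Aᵢ}(x) vᵢ(x) aᵢ/|x − cᵢ| with |vᵢ| = 1 on Aᵢ and constants aᵢ satisfying |aᵢ| ≤ |a|. Then for all t > 0, t² λ_f(t) ≤ π a². -/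
open MeasureTheory
open scoped ENNReal

/-- Volume of a closed ball in the Euclidean plane. -/
lemma volume_closedBall_plane (x : EuclideanSpace ℝ (Fin 2)) {ρ : ℝ} (hρ : 0 ≤ ρ) :
    volume (Metric.closedBall x ρ) = ENNReal.ofReal (Real.pi * ρ ^ 2) := by
  rw [EuclideanSpace.volume_closedBall]
  rw [show ((Fintype.card (Fin 2) : ℝ)/2 + 1) = 2 by simp; norm_num]
  rw [Real.Gamma_two]
  simp [Fintype.card_fin, Real.sq_sqrt Real.pi_nonneg,
    ← ENNReal.ofReal_pow hρ, ← ENNReal.ofReal_mul (by positivity : (0:ℝ) ≤ ρ^2), mul_comm]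

/-- Telescoping estimate for interleaved values. -/
lemma telescope_sum_le : ∀ {n : ℕ} (u w : Fin n → ℝ) (M : ℝ), (∀ i, 0 ≤ u i) →
    (∀ i, u i ≤ w i) → (∀ i j, i < j → w i ≤ u j) → (∀ i, w i ≤ M) → 0 ≤ M →
    ∑ i, (w i - u i) ≤ M := by
  intro n
  induction n with
  | zero => intro u w M _ _ _ _ hM; simpa using hM
  | succ m ih =>
    intro u w M hu huw hc hwM hM
    rw [Fin.sum_univ_castSucc]
    have h1 : ∑ i : Fin m, (w i.castSucc - u i.castSucc) ≤ u (Fin.last m) := by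
      refine ih (fun i => u i.castSucc) (fun i => w i.castSucc) _ (fun i => hu _)
        (fun i => huw _) (fun i j hij => hc _ _ (by simpa using hij))
        (fun i => hc _ _ (Fin.castSucc_lt_last i)) (hu _)
    have := huw (Fin.last m)
    have := hwM (Fin.last m)
    linarith

theorem concentric_annuli_distribution_estimate {n k : ℕ}
    (c : Fin n → EuclideanSpace ℝ (Fin 2)) (r s : Fin n → ℝ) (aa : ℝ) (a : Fin n → ℝ)
    (v : Fin n → EuclideanSpace ℝ (Fin 2) → EuclideanSpace ℝ (Fin k))
    (hr : ∀ i, 0 < r i) (hrs : ∀ i, r i < s i)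
    (hchain : ∀ i j : Fin n, i < j → s i ≤ r j)
    (hdisj : Pairwise (Function.onFun Disjoint
      (fun i => {x : EuclideanSpace ℝ (Fin 2) | r i < dist x (c i) ∧ dist x (c i) ≤ s i})))
    (hv : ∀ i, ∀ x ∈ {x : EuclideanSpace ℝ (Fin 2) |
        r i < dist x (c i) ∧ dist x (c i) ≤ s i}, ‖v i x‖ = 1)
    (ha : ∀ i, |a i| ≤ |aa|)
    (f : EuclideanSpace ℝ (Fin 2) → EuclideanSpace ℝ (Fin k))
    (hf : f = fun x => ∑ i, Set.indicator
        {y : EuclideanSpace ℝ (Fin 2) | r i < dist y (c i) ∧ dist y (c i) ≤ s i}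
        (fun y => (a i / dist y (c i)) • v i y) x) :
    ∀ t : ℝ, 0 < t →
      ENNReal.ofReal (t ^ 2) * volume {x | t < ‖f x‖} ≤
        ENNReal.ofReal (Real.pi * aa ^ 2) := by
  intro t ht
  set A : Fin n → Set (EuclideanSpace ℝ (Fin 2)) :=
    fun i => {x | r i < dist x (c i) ∧ dist x (c i) ≤ s i} with hA
  set ρ : ℝ := |aa| / t with hρdef
  have hρ : 0 ≤ ρ := div_nonneg (abs_nonneg _) ht.le
  -- On A i, the norm of f is |a i| / dist x (c i)
  have hnorm : ∀ i, ∀ x ∈ A i, ‖f x‖ = |a i| / dist x (c i) := by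
    intro i x hx
    have hx' : ∀ j, j ≠ i → x ∉ A j := by
      intro j hj hxj
      exact (hdisj hj).le_bot ⟨hxj, hx⟩
    rw [hf]
    simp only
    rw [Finset.sum_eq_single i]
    · rw [Set.indicator_of_mem hx, norm_smul, hv i x hx, mul_one, Real.norm_eq_abs,
        abs_div, abs_of_pos (lt_trans (hr i) hx.1)]
    · intro j _ hj
      exact Set.indicator_of_notMem (hx' j hj) _
    · intro h; exact absurd (Finset.mem_univ i) h
  -- The superlevel set is contained in the union of annuli intersected with balls
  have hsub : {x | t < ‖f x‖} ⊆ ⋃ i, A i ∩ Metric.ball (c i) ρ := by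
    intro x hx
    simp only [Set.mem_setOf_eq] at hx
    by_cases hex : ∃ i, x ∈ A i
    · obtain ⟨i, hi⟩ := hex
      refine Set.mem_iUnion.2 ⟨i, hi, ?_⟩
      have h1 : t < |a i| / dist x (c i) := by rw [← hnorm i x hi]; exact hx
      have hd : 0 < dist x (c i) := lt_trans (hr i) hi.1
      rw [Metric.mem_ball]
      have h2 : t * dist x (c i) < |a i| := (lt_div_iff₀ hd).mp h1
      calc dist x (c i) < |a i| / t := by rw [lt_div_iff₀ ht]; linarith [h2]
        _ ≤ ρ := by rw [hρdef]; exact div_le_div_of_nonneg_right (ha i) ht.le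
    · exfalso
      push_neg at hex
      have : f x = 0 := by
        rw [hf]; simp only
        refine Finset.sum_eq_zero fun j _ => Set.indicator_of_notMem (hex j) _
      rw [this, norm_zero] at hx
      linarith
  -- bound each piece by an annulus area
  set u : Fin n → ℝ := fun i => min (r i) ρ with hu
  set w : Fin n → ℝ := fun i => min (s i) ρ with hw
  have hpiece : ∀ i, volume (A i ∩ Metric.ball (c i) ρ) ≤
      ENNReal.ofReal (Real.pi * (w i ^ 2 - u i ^ 2)) := by
    intro i
    have hsub2 : A i ∩ Metric.ball (c i) ρ ⊆
        Metric.closedBall (c i) (w i) \ Metric.closedBall (c i) (u i) := by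
      rintro x ⟨⟨h1, h2⟩, h3⟩
      rw [Metric.mem_ball] at h3
      constructor
      · rw [Metric.mem_closedBall]; exact le_min h2 h3.le
      · rw [Metric.mem_closedBall]; push_neg
        exact lt_of_le_of_lt (min_le_left _ _) h1
    refine le_trans (measure_mono hsub2) ?_
    have hu0 : 0 ≤ u i := le_min (hr i).le hρ
    have hw0 : 0 ≤ w i := le_trans hu0 (min_le_min (hrs i).le le_rfl)
    have huw : u i ≤ w i := min_le_min (hrs i).le le_rfl
    rw [measure_diff (Metric.closedBall_subset_closedBall huw)
      measurableSet_closedBall.nullMeasurableSet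
      measure_closedBall_lt_top.ne]
    rw [volume_closedBall_plane _ hw0, volume_closedBall_plane _ hu0]
    rw [← ENNReal.ofReal_sub _ (by positivity)]
    rw [mul_sub]
  -- sum the pieces
  have hsum : volume {x | t < ‖f x‖} ≤ ENNReal.ofReal (Real.pi * ρ ^ 2) := by
    refine le_trans (measure_mono hsub) (le_trans (measure_iUnion_fintype_le _ _) ?_)
    refine le_trans (Finset.sum_le_sum fun i _ => hpiece i) ?_
    rw [← ENNReal.ofReal_sum_of_nonneg (fun i _ => by
      have h1 : u i ≤ w i := min_le_min (hrs i).le le_rfl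
      have hu0 : 0 ≤ u i := le_min (hr i).le hρ
      have h2 : u i ^ 2 ≤ w i ^ 2 := pow_le_pow_left₀ hu0 h1 2
      nlinarith [Real.pi_pos])]
    refine ENNReal.ofReal_le_ofReal ?_
    have : ∑ i, Real.pi * (w i ^ 2 - u i ^ 2) = Real.pi * ∑ i, (w i ^ 2 - u i ^ 2) := by
      rw [Finset.mul_sum]
    rw [this]
    refine mul_le_mul_of_nonneg_left ?_ Real.pi_pos.le
    refine telescope_sum_le (fun i => u i ^ 2) (fun i => w i ^ 2) (ρ ^ 2)
      (fun i => by positivity)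
      (fun i => by
        have hu0 : 0 ≤ u i := le_min (hr i).le hρ
        exact pow_le_pow_left₀ hu0 (min_le_min (hrs i).le le_rfl) 2)
      (fun i j hij => by
        have hw0 : 0 ≤ w i := le_trans (le_min (hr i).le hρ) (min_le_min (hrs i).le le_rfl)
        exact pow_le_pow_left₀ hw0 (min_le_min (hchain i j hij) le_rfl) 2)
      (fun i => by
        have hw0 : 0 ≤ w i := le_trans (le_min (hr i).le hρ) (min_le_min (hrs i).le le_rfl)
        exact pow_le_pow_left₀ hw0 (min_le_right _ _) 2)
      (by positivity)
  calc ENNReal.ofReal (t ^ 2) * volume {x | t < ‖f x‖}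
      ≤ ENNReal.ofReal (t ^ 2) * ENNReal.ofReal (Real.pi * ρ ^ 2) :=
        mul_le_mul_right hsum _
    _ = ENNReal.ofReal (t ^ 2 * (Real.pi * ρ ^ 2)) :=
        (ENNReal.ofReal_mul (by positivity)).symm
    _ ≤ ENNReal.ofReal (Real.pi * aa ^ 2) := by
        refine ENNReal.ofReal_le_ofReal (le_of_eq ?_)
        rw [hρdef, div_pow, sq_abs]
        field_simp
end

section
/- For Ω ⊂ ℝ² open and compact ω ⊂ Ω define r_Ω(ω) = sup{ r(K ∩ ω) : K ⊂ Ω compact, ∂K ∩ ω = ∅ }, where r(·) is the infimum of total radii of finite ball-coverings. Then for compact sets ω₁, ω₂ ⊂ Ω: r_Ω(ω₁ ∪ ω₂) ≤ r_Ω(ω₁) + r_Ω(ω₂). -/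
open Metric

/-- The radius of a set: the infimum of total radii of finite coverings by closed balls. -/
noncomputable def setRadius (ω : Set (EuclideanSpace ℝ (Fin 2))) : ℝ :=
  sInf {t : ℝ | ∃ (n : ℕ) (c : Fin n → EuclideanSpace ℝ (Fin 2)) (ρ : Fin n → ℝ),
    (∀ i, 0 ≤ ρ i) ∧ ω ⊆ (⋃ i, closedBall (c i) (ρ i)) ∧ t = ∑ i, ρ i}

/-- The modified radius of `ω` relative to the open set `Ω`. -/
noncomputable def setRadiusIn (Ω ω : Set (EuclideanSpace ℝ (Fin 2))) : ℝ :=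
  sSup {t : ℝ | ∃ K : Set (EuclideanSpace ℝ (Fin 2)),
    K ⊆ Ω ∧ IsCompact K ∧ frontier K ∩ ω = ∅ ∧ t = setRadius (K ∩ ω)}

namespace SetRadiusAux

abbrev E := EuclideanSpace ℝ (Fin 2)

def coverSet (ω : Set E) : Set ℝ :=
  {t : ℝ | ∃ (n : ℕ) (c : Fin n → E) (ρ : Fin n → ℝ),
    (∀ i, 0 ≤ ρ i) ∧ ω ⊆ (⋃ i, closedBall (c i) (ρ i)) ∧ t = ∑ i, ρ i}

lemma setRadius_eq (ω : Set E) : setRadius ω = sInf (coverSet ω) := rfl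

lemma coverSet_nonneg {ω : Set E} : ∀ t ∈ coverSet ω, (0:ℝ) ≤ t := by
  rintro t ⟨n, c, ρ, hρ, -, rfl⟩
  exact Finset.sum_nonneg fun i _ => hρ i

lemma coverSet_bddBelow (ω : Set E) : BddBelow (coverSet ω) :=
  ⟨0, fun t ht => coverSet_nonneg t ht⟩

lemma setRadius_nonneg (ω : Set E) : 0 ≤ setRadius ω :=
  Real.sInf_nonneg coverSet_nonneg

lemma coverSet_nonempty {ω : Set E} (hω : IsCompact ω) : (coverSet ω).Nonempty := by
  obtain ⟨r, hr⟩ := hω.isBounded.subset_closedBall (0 : E)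
  refine ⟨max r 0, 1, fun _ => 0, fun _ => max r 0, fun _ => le_max_right _ _, ?_, ?_⟩
  · intro x hx
    exact Set.mem_iUnion.2 ⟨0, closedBall_subset_closedBall (le_max_left _ _) (hr hx)⟩
  · simp

lemma coverSet_anti {A B : Set E} (h : A ⊆ B) : coverSet B ⊆ coverSet A := by
  rintro t ⟨n, c, ρ, hρ, hc, rfl⟩
  exact ⟨n, c, ρ, hρ, h.trans hc, rfl⟩

lemma setRadius_mono {A B : Set E} (h : A ⊆ B) (hB : IsCompact B) :
    setRadius A ≤ setRadius B :=
  csInf_le_csInf (coverSet_bddBelow A) (coverSet_nonempty hB) (coverSet_anti h)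

lemma setRadius_union_le {A B : Set E} (hA : IsCompact A) (hB : IsCompact B) :
    setRadius (A ∪ B) ≤ setRadius A + setRadius B := by
  have key : ∀ a ∈ coverSet A, ∀ b ∈ coverSet B, setRadius (A ∪ B) ≤ a + b := by
    rintro a ⟨n, c, ρ, hρ, hc, rfl⟩ b ⟨m, d, σ, hσ, hd, rfl⟩
    refine csInf_le (coverSet_bddBelow _)
      ⟨n + m, Fin.append c d, Fin.append ρ σ, ?_, ?_, ?_⟩
    · intro i
      refine Fin.addCases (fun j => ?_) (fun j => ?_) i
      · rw [Fin.append_left]; exact hρ j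
      · rw [Fin.append_right]; exact hσ j
    · rintro x (hx | hx)
      · obtain ⟨i, hi⟩ := Set.mem_iUnion.1 (hc hx)
        refine Set.mem_iUnion.2 ⟨Fin.castAdd m i, ?_⟩
        rwa [Fin.append_left, Fin.append_left]
      · obtain ⟨i, hi⟩ := Set.mem_iUnion.1 (hd hx)
        refine Set.mem_iUnion.2 ⟨Fin.natAdd n i, ?_⟩
        rwa [Fin.append_right, Fin.append_right]
    · rw [Fin.sum_univ_add]
      simp [Fin.append_left, Fin.append_right]
  have hAne := coverSet_nonempty hA
  have hBne := coverSet_nonempty hB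
  have step1 : ∀ b ∈ coverSet B, setRadius (A ∪ B) - b ≤ setRadius A := by
    intro b hb
    exact le_csInf hAne fun a ha => by linarith [key a ha b hb]
  have step2 : setRadius (A ∪ B) - setRadius A ≤ setRadius B :=
    le_csInf hBne fun b hb => by linarith [step1 b hb]
  linarith

end SetRadiusAux

open SetRadiusAux in
theorem setRadiusIn_union_le (Ω ω₁ ω₂ : Set (EuclideanSpace ℝ (Fin 2)))
    (hΩ : IsOpen Ω) (h₁ : IsCompact ω₁) (h₂ : IsCompact ω₂)
    (h₁Ω : ω₁ ⊆ Ω) (h₂Ω : ω₂ ⊆ Ω) :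
    setRadiusIn Ω (ω₁ ∪ ω₂) ≤ setRadiusIn Ω ω₁ + setRadiusIn Ω ω₂ := by
  have bdd : ∀ (ω : Set E), IsCompact ω → BddAbove
      {t : ℝ | ∃ K : Set E, K ⊆ Ω ∧ IsCompact K ∧ frontier K ∩ ω = ∅ ∧
        t = setRadius (K ∩ ω)} := by
    intro ω hω
    refine ⟨setRadius ω, ?_⟩
    rintro t ⟨K, -, -, -, rfl⟩
    exact setRadius_mono Set.inter_subset_right hω
  have memEmpty : ∀ (ω : Set E), setRadius (∅ ∩ ω) ∈
      {t : ℝ | ∃ K : Set E, K ⊆ Ω ∧ IsCompact K ∧ frontier K ∩ ω = ∅ ∧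
        t = setRadius (K ∩ ω)} := by
    intro ω
    exact ⟨∅, Set.empty_subset _, isCompact_empty, by simp, rfl⟩
  have nonneg : ∀ (ω : Set E), IsCompact ω → 0 ≤ setRadiusIn Ω ω := by
    intro ω hω
    exact le_trans (setRadius_nonneg _) (le_csSup (bdd ω hω) (memEmpty ω))
  refine Real.sSup_le ?_ (add_nonneg (nonneg ω₁ h₁) (nonneg ω₂ h₂))
  rintro t ⟨K, hKΩ, hK, hKf, rfl⟩
  have hsplit : K ∩ (ω₁ ∪ ω₂) = (K ∩ ω₁) ∪ (K ∩ ω₂) := Set.inter_union_distrib_left ..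
  have hle : setRadius (K ∩ (ω₁ ∪ ω₂)) ≤ setRadius (K ∩ ω₁) + setRadius (K ∩ ω₂) := by
    rw [hsplit]
    exact setRadius_union_le (hK.inter_right h₁.isClosed) (hK.inter_right h₂.isClosed)
  have hf₁ : frontier K ∩ ω₁ = ∅ :=
    Set.eq_empty_of_subset_empty (hKf ▸ Set.inter_subset_inter_right _ Set.subset_union_left)
  have hf₂ : frontier K ∩ ω₂ = ∅ :=
    Set.eq_empty_of_subset_empty (hKf ▸ Set.inter_subset_inter_right _ Set.subset_union_right)
  have m₁ : setRadius (K ∩ ω₁) ≤ setRadiusIn Ω ω₁ :=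
    le_csSup (bdd ω₁ h₁) ⟨K, hKΩ, hK, hf₁, rfl⟩
  have m₂ : setRadius (K ∩ ω₂) ≤ setRadiusIn Ω ω₂ :=
    le_csSup (bdd ω₂ h₂) ⟨K, hKΩ, hK, hf₂, rfl⟩
  linarith
end
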